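/- The set I′ = ⋃_{s ∈ B} [τ(s), τ(s + ⟨1⟩)] is dense in the interval [0,1]. -/

import Mathlib

/-- The `j`-th entry (1-indexed) of a finite sequence of positive naturals,
viewed as a natural number. Only used for `1 ≤ j ≤ s.length`. -/
def nthSeq (s : List ℕ+) (j : ℕ) : ℕ := ↑(s.getD (j - 1) 1)

/-- The linear order `⪯` on finite sequences of positive natural numbers:
`s ⪯ t` iff either (a) there is an index `j ≤ min (ℓ s) (ℓ t)` which is the first index where
`s` and `t` differ, and there `s j < t j`, or (b) `ℓ s ≤ ℓ t` and `t` extends `s`. -/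
def sle (s t : List ℕ+) : Prop :=
  (∃ j, 1 ≤ j ∧ j ≤ min s.length t.length ∧
     (∀ i, 1 ≤ i → i < j → nthSeq s i = nthSeq t i) ∧ nthSeq s j < nthSeq t j) ∨
  (s.length ≤ t.length ∧ ∀ j, 1 ≤ j → j ≤ s.length → nthSeq s j = nthSeq t j)

/-- The strict version `≺` of the order `⪯`. -/
def slt (s t : List ℕ+) : Prop := sle s t ∧ s ≠ t

/-- The set `B` of nonempty sequences `s` with `s i ≤ i` for all `1 ≤ i ≤ ℓ s`. -/
def BSet : Set (List ℕ+) := {s | 1 ≤ s.length ∧ ∀ i, 1 ≤ i → i ≤ s.length → nthSeq s i ≤ i}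

/-- `λ n = 1 / (2^n n!)`. -/
noncomputable def lam (n : ℕ) : ℝ := 1 / ((2 : ℝ) ^ n * (n.factorial : ℝ))

/-- `τ s = Σ_{t ∈ B, t ≺ s} λ (ℓ t)`. -/
noncomputable def tau (s : List ℕ+) : ℝ :=
  ∑' t : {t : List ℕ+ // t ∈ BSet ∧ slt t s}, lam t.1.length

/-! ### Basic lemmas about `nthSeq` -/

lemma nthSeq_pos (s : List ℕ+) (j : ℕ) : 1 ≤ nthSeq s j := (s.getD (j-1) 1).one_le

lemma nthSeq_eq_get (s : List ℕ+) (j : ℕ) (h1 : 1 ≤ j) (h2 : j ≤ s.length) :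
    nthSeq s j = ↑(s.get ⟨j - 1, by omega⟩) := by
  unfold nthSeq; rw [List.getD_eq_getElem]; rfl

lemma nthSeq_append_left (s r : List ℕ+) (j : ℕ) (h1 : 1 ≤ j) (h2 : j ≤ s.length) :
    nthSeq (s ++ r) j = nthSeq s j := by
  unfold nthSeq; rw [List.getD_append]; omega

lemma nthSeq_append_last (s : List ℕ+) (k : ℕ+) :
    nthSeq (s ++ [k]) (s.length + 1) = ↑k := by unfold nthSeq; simp

lemma list_ext (s t : List ℕ+) (hl : s.length = t.length)
    (h : ∀ j, 1 ≤ j → j ≤ s.length → nthSeq s j = nthSeq t j) : s = t := by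
  apply List.ext_get hl
  intro n h1 h2
  have := h (n+1) (by omega) (by omega)
  rw [nthSeq_eq_get s (n+1) (by omega) (by omega),
      nthSeq_eq_get t (n+1) (by omega) (by omega)] at this
  simpa using PNat.coe_injective (by simpa using this)

/-! ### Order lemmas -/

lemma sle_refl (s : List ℕ+) : sle s s := Or.inr ⟨le_refl _, fun _ _ _ => rfl⟩

lemma sle_antisymm {s t : List ℕ+} (h1 : sle s t) (h2 : sle t s) : s = t := by
  rcases h1 with ⟨j, hj1, hj2, hagree, hlt⟩ | ⟨hlen, hagree⟩
  · rcases h2 with ⟨j', hj1', hj2', hagree', hlt'⟩ | ⟨hlen', hagree'⟩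
    · rcases lt_trichotomy j j' with h | h | h
      · exact absurd (hagree' j hj1 h).symm (Nat.ne_of_lt hlt)
      · subst h; omega
      · exact absurd (hagree j' hj1' h) (Nat.ne_of_lt hlt').symm
    · exact absurd (hagree' j hj1 (le_trans hj2 (min_le_right _ _))).symm (Nat.ne_of_lt hlt)
  · rcases h2 with ⟨j', hj1', hj2', hagree', hlt'⟩ | ⟨hlen', hagree'⟩
    · exact absurd (hagree j' hj1' (le_trans hj2' (min_le_right _ _))) (Nat.ne_of_lt hlt').symm
    · exact list_ext s t (le_antisymm hlen hlen') hagree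

lemma sle_total (s t : List ℕ+) : sle s t ∨ sle t s := by
  classical
  by_cases hex : ∃ j, (1 ≤ j ∧ j ≤ min s.length t.length) ∧ nthSeq s j ≠ nthSeq t j
  · set j := Nat.find hex with hjdef
    obtain ⟨⟨hj1, hj2⟩, hne⟩ := Nat.find_spec hex
    have hagree : ∀ i, 1 ≤ i → i < j → nthSeq s i = nthSeq t i := by
      intro i h1 hi
      by_contra hne'
      exact (Nat.find_min hex hi) ⟨⟨h1, by omega⟩, hne'⟩
    rcases lt_or_gt_of_ne hne with h | h
    · exact Or.inl (Or.inl ⟨j, hj1, hj2, hagree, h⟩)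
    · exact Or.inr (Or.inl ⟨j, hj1, by omega, fun i a b => (hagree i a b).symm, h⟩)
  · push_neg at hex
    have hagree : ∀ i, 1 ≤ i → i ≤ min s.length t.length → nthSeq s i = nthSeq t i :=
      fun i h1 h2 => hex i ⟨h1, h2⟩
    rcases le_total s.length t.length with h | h
    · exact Or.inl (Or.inr ⟨h, fun j hj1 hj2 => hagree j hj1 (by omega)⟩)
    · exact Or.inr (Or.inr ⟨h, fun j hj1 hj2 => (hagree j hj1 (by omega)).symm⟩)

lemma sle_trans' {s t u : List ℕ+} (h1 : sle s t) (h2 : sle t u) : sle s u := by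
  rcases h1 with ⟨j, hj1, hj2, ha, hlt⟩ | ⟨hlen, ha⟩
  · rcases h2 with ⟨j', hj1', hj2', ha', hlt'⟩ | ⟨hlen', ha'⟩
    · rcases lt_trichotomy j j' with h | h | h
      · refine Or.inl ⟨j, hj1, by omega, fun i i1 i2 => (ha i i1 i2).trans (ha' i i1 (by omega)), ?_⟩
        rw [← ha' j hj1 h]; exact hlt
      · subst h
        exact Or.inl ⟨j, hj1, by omega, fun i i1 i2 => (ha i i1 i2).trans (ha' i i1 i2),
          lt_trans hlt hlt'⟩
      · refine Or.inl ⟨j', hj1', by omega, fun i i1 i2 => (ha i i1 (by omega)).trans (ha' i i1 i2), ?_⟩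
        rw [ha j' hj1' h]; exact hlt'
    · refine Or.inl ⟨j, hj1, by omega, fun i i1 i2 => (ha i i1 i2).trans (ha' i i1 (by omega)), ?_⟩
      rw [← ha' j hj1 (by omega)]; exact hlt
  · rcases h2 with ⟨j', hj1', hj2', ha', hlt'⟩ | ⟨hlen', ha'⟩
    · by_cases hc : j' ≤ s.length
      · refine Or.inl ⟨j', hj1', by omega, fun i i1 i2 => (ha i i1 (by omega)).trans (ha' i i1 i2), ?_⟩
        rw [ha j' hj1' hc]; exact hlt'
      · exact Or.inr ⟨by omega, fun i i1 i2 => (ha i i1 i2).trans (ha' i i1 (by omega))⟩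
    · exact Or.inr ⟨by omega, fun i i1 i2 => (ha i i1 i2).trans (ha' i i1 (by omega))⟩

lemma sle_append_one (s : List ℕ+) : sle s (s ++ [1]) :=
  Or.inr ⟨by simp, fun j h1 h2 => (nthSeq_append_left s [1] j h1 h2).symm⟩

lemma ne_append_one (s : List ℕ+) : s ≠ s ++ [1] := by
  intro h; have := congrArg List.length h; simp at this

lemma slt_append_one_iff (s t : List ℕ+) : slt t (s ++ [1]) ↔ sle t s := by
  constructor
  · rintro ⟨h, hne⟩
    rcases h with ⟨j, hj1, hj2, ha, hlt⟩ | ⟨hlen, ha⟩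
    · simp only [List.length_append, List.length_singleton] at hj2
      by_cases hc : j ≤ s.length
      · refine Or.inl ⟨j, hj1, by omega, fun i i1 i2 => (ha i i1 i2).trans
          (nthSeq_append_left s [1] i i1 (by omega)), ?_⟩
        rw [nthSeq_append_left s [1] j hj1 hc] at hlt; exact hlt
      · have hj : j = s.length + 1 := by omega
        rw [hj, nthSeq_append_last] at hlt
        have := nthSeq_pos t (s.length + 1)
        simp at hlt; omega
    · simp only [List.length_append, List.length_singleton] at hlen
      by_cases hc : t.length ≤ s.length
      · exact Or.inr ⟨hc, fun i i1 i2 => (ha i i1 i2).trans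
          (nthSeq_append_left s [1] i i1 (by omega))⟩
      · exact absurd (list_ext t (s ++ [1]) (by simp; omega) ha) hne
  · intro h
    refine ⟨sle_trans' h (sle_append_one s), fun heq => ?_⟩
    subst heq
    exact ne_append_one s (sle_antisymm (sle_append_one s) h)

lemma append_one_mem_BSet {s : List ℕ+} (hs : s ∈ BSet) : s ++ [1] ∈ BSet := by
  obtain ⟨h1, h2⟩ := hs
  refine ⟨by simp, fun i i1 i2 => ?_⟩
  simp only [List.length_append, List.length_singleton] at i2
  by_cases hc : i ≤ s.length
  · rw [nthSeq_append_left s [1] i i1 hc]; exact h2 i i1 hc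
  · have : i = s.length + 1 := by omega
    rw [this, nthSeq_append_last]
    simp only [PNat.one_coe]
    omega

/-! ### The parametrization of `BSet` -/

def phi (p : Σ n : ℕ, (∀ j : Fin (n+1), Fin (j.val+1))) : List ℕ+ :=
  List.ofFn (fun j : Fin (p.1+1) => (⟨p.2 j + 1, Nat.succ_pos _⟩ : ℕ+))

lemma phi_length (p) : (phi p).length = p.1 + 1 := by unfold phi; exact List.length_ofFn

lemma phi_nth (p) (i : ℕ) (hi : i < p.1 + 1) : nthSeq (phi p) (i+1) = p.2 ⟨i, hi⟩ + 1 := by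
  unfold nthSeq
  rw [List.getD_eq_getElem _ _ (by rw [phi_length]; omega)]
  simp only [Nat.add_sub_cancel, phi]
  exact congrArg PNat.val (List.getElem_ofFn (f := fun j : Fin (p.1+1) => (⟨p.2 j + 1, Nat.succ_pos _⟩ : ℕ+))
    (by rw [List.length_ofFn]; exact hi))

lemma phi_nth' (p) (i : ℕ) (i1 : 1 ≤ i) (hi : i ≤ p.1 + 1) :
    nthSeq (phi p) i = p.2 ⟨i - 1, by omega⟩ + 1 := by
  obtain ⟨k, rfl⟩ : ∃ k, i = k + 1 := ⟨i - 1, by omega⟩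
  simpa using phi_nth p k (by omega)

lemma phi_mem (p) : phi p ∈ BSet := by
  refine ⟨by rw [phi_length]; omega, fun i i1 i2 => ?_⟩
  rw [phi_length] at i2
  rw [phi_nth' p i i1 i2]
  have h := (p.2 ⟨i-1, by omega⟩).isLt
  simp only [Fin.val_mk] at h ⊢
  omega

lemma phi_injective : Function.Injective phi := by
  rintro ⟨n, v⟩ ⟨m, w⟩ h
  have hlen : n = m := by
    have := congrArg List.length h
    rw [phi_length, phi_length] at this
    simpa using this
  subst hlen
  have : v = w := by
    funext j
    have h1 := phi_nth ⟨n, v⟩ j.val j.isLt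
    have h2 := phi_nth ⟨n, w⟩ j.val j.isLt
    rw [h] at h1
    rw [h1] at h2
    simp only [Fin.eta] at h2
    exact Fin.ext (by omega)
  subst this; rfl

lemma phi_surj : ∀ t ∈ BSet, ∃ p, phi p = t := by
  rintro t ⟨h1, h2⟩
  have hbound : ∀ j : Fin (t.length - 1 + 1), nthSeq t (j.val + 1) - 1 < j.val + 1 := by
    intro j
    have hb := h2 (j.val + 1) (by omega) (by omega)
    omega
  set p : Σ n : ℕ, (∀ j : Fin (n+1), Fin (j.val+1)) :=
    ⟨t.length - 1, fun j => ⟨nthSeq t (j.val + 1) - 1, hbound j⟩⟩ with hp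
  have hp1 : p.1 = t.length - 1 := rfl
  refine ⟨p, list_ext _ _ (by rw [phi_length, hp1]; omega) ?_⟩
  intro j j1 j2
  rw [phi_length, hp1] at j2
  rw [phi_nth' p j j1 (by omega)]
  have hval : (p.2 ⟨j - 1, by omega⟩ : ℕ) = nthSeq t (j - 1 + 1) - 1 := rfl
  rw [hval]
  have h0 : j - 1 + 1 = j := by omega
  rw [h0]
  have := nthSeq_pos t j
  omega

noncomputable def phiEquiv : (Σ n : ℕ, (∀ j : Fin (n+1), Fin (j.val+1))) ≃ ↥BSet :=
  Equiv.ofBijective (fun p => ⟨phi p, phi_mem p⟩)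
    ⟨fun p q h => phi_injective (congrArg Subtype.val h),
     fun ⟨t, ht⟩ => by obtain ⟨p, hp⟩ := phi_surj t ht; exact ⟨p, Subtype.ext hp⟩⟩

/-! ### Total mass computations -/

lemma lam_nonneg (n : ℕ) : 0 ≤ lam n := by
  unfold lam; positivity

lemma fin_pi_card (n : ℕ) : (Fintype.card (∀ j : Fin (n+1), Fin (j.val+1)) : ℝ) =
    ((n+1).factorial : ℝ) := by
  rw [Fintype.card_pi]
  norm_cast
  simp only [Fintype.card_fin]
  induction (n+1) with
  | zero => simp
  | succ k ih => rw [Fin.prod_univ_castSucc]; simp [ih, Nat.factorial_succ]; ring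

lemma sigma_fiber_sum (n : ℕ) :
    ∑' _ : (∀ j : Fin (n+1), Fin (j.val+1)), lam (n+1) = (1/2 : ℝ)^(n+1) := by
  rw [tsum_fintype]
  rw [Finset.sum_const, nsmul_eq_mul]
  have hcard := fin_pi_card n
  have hne : ((n+1).factorial : ℝ) ≠ 0 := by positivity
  rw [show (Finset.univ.card : ℝ) = (Fintype.card (∀ j : Fin (n+1), Fin (j.val+1)) : ℝ) from rfl,
    hcard]
  unfold lam
  field_simp
  rw [← mul_pow]; norm_num

lemma summable_sigma_lam :
    Summable (fun p : (Σ n : ℕ, (∀ j : Fin (n+1), Fin (j.val+1))) => lam (p.1+1)) := by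
  rw [summable_sigma_of_nonneg (fun _ => lam_nonneg _)]
  constructor
  · intro n; exact .of_finite
  · refine Summable.congr (f := fun n : ℕ => (1/2 : ℝ)^(n+1)) ?_
      (fun n => (sigma_fiber_sum n).symm)
    exact ((summable_geometric_of_lt_one (by norm_num : (0:ℝ) ≤ 1/2)
      (by norm_num : (1/2:ℝ) < 1)).mul_left (1/2)).congr (fun n => by ring)

lemma tsum_sigma_lam :
    ∑' p : (Σ n : ℕ, (∀ j : Fin (n+1), Fin (j.val+1))), lam (p.1+1) = 1 := by
  rw [Summable.tsum_sigma summable_sigma_lam]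
  have : (fun n : ℕ => ∑' v : (∀ j : Fin (n+1), Fin (j.val+1)), lam (n+1)) =
      (fun n : ℕ => (1/2 : ℝ)^(n+1)) := funext sigma_fiber_sum
  rw [this]
  have h : ∑' n : ℕ, (1/2:ℝ)^n = 2 := by
    rw [tsum_geometric_of_lt_one (by norm_num) (by norm_num)]; norm_num
  calc ∑' n : ℕ, (1/2:ℝ)^(n+1) = ∑' n : ℕ, (1/2) * (1/2:ℝ)^n := by
        congr 1; funext n; ring
    _ = (1/2) * 2 := by rw [tsum_mul_left, h]
    _ = 1 := by norm_num

lemma summable_BSet : Summable (fun t : ↥BSet => lam t.1.length) := by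
  have := summable_sigma_lam
  have h2 : (fun t : ↥BSet => lam t.1.length) ∘ phiEquiv =
      (fun p : (Σ n : ℕ, (∀ j : Fin (n+1), Fin (j.val+1))) => lam (p.1+1)) := by
    funext p
    simp only [Function.comp_apply, phiEquiv, Equiv.coe_ofBijective, phi_length]
    exact congrArg lam (phi_length p)
  rw [← Equiv.summable_iff phiEquiv, h2]
  exact this

lemma tsum_BSet : ∑' t : ↥BSet, lam t.1.length = 1 := by
  rw [← Equiv.tsum_eq phiEquiv (fun t : ↥BSet => lam t.1.length)]
  rw [show (fun p => (fun t : ↥BSet => lam t.1.length) (phiEquiv p)) =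
      (fun p : (Σ n : ℕ, (∀ j : Fin (n+1), Fin (j.val+1))) => lam (p.1+1)) from
    funext fun p => by simp only [phiEquiv, Equiv.coe_ofBijective, phi_length]; exact congrArg lam (phi_length p)]
  exact tsum_sigma_lam

/-! ### Indicator machinery for `tau` -/

noncomputable def lamLen : List ℕ+ → ℝ := fun t => lam t.length

lemma summable_indicator_BSet : Summable (BSet.indicator lamLen) := by
  rw [← summable_subtype_iff_indicator]
  exact summable_BSet

lemma tsum_indicator_BSet : ∑' t, BSet.indicator lamLen t = 1 := by
  rw [← tsum_subtype]
  exact tsum_BSet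

lemma indicator_le_BSet (A : Set (List ℕ+)) (hA : A ⊆ BSet) :
    ∀ t, A.indicator lamLen t ≤ BSet.indicator lamLen t := fun t =>
  Set.indicator_le_indicator_of_subset hA (fun x => lam_nonneg _) t

lemma indicator_nonneg' (A : Set (List ℕ+)) : ∀ t, 0 ≤ A.indicator lamLen t := fun t =>
  Set.indicator_nonneg (fun x _ => lam_nonneg _) t

lemma summable_indicator (A : Set (List ℕ+)) (hA : A ⊆ BSet) :
    Summable (A.indicator lamLen) :=
  Summable.of_nonneg_of_le (indicator_nonneg' A) (indicator_le_BSet A hA) summable_indicator_BSet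

lemma tau_eq_tsum_indicator (s : List ℕ+) :
    tau s = ∑' t, ({t | t ∈ BSet ∧ slt t s}).indicator lamLen t := by
  unfold tau
  rw [← tsum_subtype]
  rfl

lemma slt_subset_BSet (s : List ℕ+) : {t | t ∈ BSet ∧ slt t s} ⊆ BSet := fun t ht => ht.1

lemma sle_subset_BSet (s : List ℕ+) : {t | t ∈ BSet ∧ sle t s} ⊆ BSet := fun t ht => ht.1

lemma tau_nonneg (s : List ℕ+) : 0 ≤ tau s := by
  rw [tau_eq_tsum_indicator]
  exact tsum_nonneg (indicator_nonneg' _)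

lemma tau_le_one (s : List ℕ+) : tau s ≤ 1 := by
  rw [tau_eq_tsum_indicator, ← tsum_indicator_BSet]
  exact Summable.tsum_le_tsum (indicator_le_BSet _ (slt_subset_BSet s))
    (summable_indicator _ (slt_subset_BSet s)) summable_indicator_BSet

lemma tau_append_one {s : List ℕ+} (hs : s ∈ BSet) :
    tau (s ++ [1]) = tau s + lam s.length := by
  rw [tau_eq_tsum_indicator, tau_eq_tsum_indicator]
  have hset : {t | t ∈ BSet ∧ slt t (s ++ [1])} = {t | t ∈ BSet ∧ slt t s} ∪ {s} := by
    ext t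
    simp only [Set.mem_setOf_eq, Set.mem_union, Set.mem_singleton_iff]
    rw [slt_append_one_iff]
    constructor
    · rintro ⟨htB, hle⟩
      by_cases he : t = s
      · exact Or.inr he
      · exact Or.inl ⟨htB, hle, he⟩
    · rintro (⟨htB, hlt, hne⟩ | rfl)
      · exact ⟨htB, hlt⟩
      · exact ⟨hs, sle_refl t⟩
  rw [hset]
  have hdisj : Disjoint {t | t ∈ BSet ∧ slt t s} ({s} : Set (List ℕ+)) := by
    rw [Set.disjoint_singleton_right]
    rintro ⟨-, -, hne⟩
    exact hne rfl
  rw [Set.indicator_union_of_disjoint hdisj]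
  rw [Summable.tsum_add (summable_indicator _ (slt_subset_BSet s))
    (summable_indicator {s} (by intro x hx; rw [Set.mem_singleton_iff] at hx; subst hx; exact hs))]
  · congr 1
    rw [← tsum_subtype]
    exact tsum_singleton s lamLen

lemma tau_mono {s t : List ℕ+} (hs : s ∈ BSet) (ht : t ∈ BSet) (h : slt s t) :
    tau (s ++ [1]) ≤ tau t := by
  rw [tau_eq_tsum_indicator, tau_eq_tsum_indicator]
  apply Summable.tsum_le_tsum _ (summable_indicator _ (slt_subset_BSet _))
    (summable_indicator _ (slt_subset_BSet _))
  intro u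
  apply Set.indicator_le_indicator_of_subset _ (fun x => lam_nonneg _)
  rintro u ⟨huB, hu⟩
  rw [slt_append_one_iff] at hu
  refine ⟨huB, sle_trans' hu h.1, fun he => ?_⟩
  subst he
  exact h.2 (sle_antisymm h.1 hu)

/-! ### The measure-theoretic argument -/

open MeasureTheory

lemma union_subset_Icc :
    (⋃ s ∈ BSet, Set.Icc (tau s) (tau (s ++ [1]))) ⊆ Set.Icc (0 : ℝ) 1 := by
  refine Set.iUnion₂_subset fun s _ => ?_
  intro x hx
  exact ⟨le_trans (tau_nonneg s) hx.1, le_trans hx.2 (tau_le_one _)⟩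

lemma volume_union_ge :
    1 ≤ volume (⋃ s ∈ BSet, Set.Icc (tau s) (tau (s ++ [1]))) := by
  set J : ↥BSet → Set ℝ := fun s => Set.Ioo (tau s.1) (tau (s.1 ++ [1])) with hJ
  have hsub : (⋃ i, J i) ⊆ ⋃ s ∈ BSet, Set.Icc (tau s) (tau (s ++ [1])) := by
    refine Set.iUnion_subset fun i => ?_
    exact le_trans Set.Ioo_subset_Icc_self
      (Set.subset_biUnion_of_mem (u := fun s => Set.Icc (tau s) (tau (s ++ [1]))) i.2)
  have hkey : ∀ (i j : ↥BSet), slt i.1 j.1 → Disjoint (J i) (J j) := by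
    intro i j hij
    have hm := tau_mono i.2 j.2 hij
    rw [Set.disjoint_left]
    rintro x ⟨-, hx2⟩ ⟨hx3, -⟩
    linarith
  have hdisj : Pairwise (Function.onFun Disjoint J) := by
    intro i j hne
    have hvne : i.1 ≠ j.1 := fun h => hne (Subtype.ext h)
    rcases sle_total i.1 j.1 with h | h
    · exact hkey i j ⟨h, hvne⟩
    · exact (hkey j i ⟨h, hvne.symm⟩).symm
  have hmeas : ∀ i, MeasurableSet (J i) := fun i => measurableSet_Ioo
  calc (1 : ENNReal) = volume (⋃ i, J i) := by
        rw [measure_iUnion hdisj hmeas]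
        have : ∀ i : ↥BSet, volume (J i) = ENNReal.ofReal (lam i.1.length) := by
          intro i
          rw [hJ]
          simp only [Real.volume_Ioo]
          rw [tau_append_one i.2]
          ring_nf
        rw [tsum_congr this]
        rw [← ENNReal.ofReal_tsum_of_nonneg (fun i => lam_nonneg _) summable_BSet]
        rw [tsum_BSet]
        simp
    _ ≤ _ := measure_mono hsub

/-- The set `I' = ⋃_{s ∈ B} [τ s, τ (s + ⟨1⟩)]` is dense in the unit interval `[0,1]`. -/
theorem Iprime_dense :
    ∀ x ∈ Set.Icc (0 : ℝ) 1,
      x ∈ closure (⋃ s ∈ BSet, Set.Icc (tau s) (tau (s ++ [1]))) := by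
  intro x hx
  set U := ⋃ s ∈ BSet, Set.Icc (tau s) (tau (s ++ [1])) with hU
  rw [Metric.mem_closure_iff]
  intro ε hε
  set a := max 0 (x - ε) with ha
  set b := min 1 (x + ε) with hb
  have hab : a < b := by
    obtain ⟨hx0, hx1⟩ := hx
    apply max_lt <;> apply lt_min <;> linarith
  by_contra hcon
  push_neg at hcon
  have hVU : Set.Ioo a b ∩ U = ∅ := by
    ext y
    simp only [Set.mem_inter_iff, Set.mem_Ioo, Set.mem_empty_iff_false, iff_false, not_and]
    rintro ⟨hy1, hy2⟩ hyU
    have h1 : x - ε ≤ a := le_max_right 0 (x - ε)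
    have h2 : b ≤ x + ε := min_le_right 1 (x + ε)
    have hd : dist x y < ε := by
      rw [Real.dist_eq, abs_lt]
      constructor <;> linarith
    exact absurd hd (not_lt.2 (hcon y hyU))
  have hUsub : U ⊆ Set.Icc (0:ℝ) 1 \ Set.Ioo a b := by
    intro y hy
    refine ⟨union_subset_Icc hy, fun hyV => ?_⟩
    have : y ∈ Set.Ioo a b ∩ U := ⟨hyV, hy⟩
    rw [hVU] at this
    exact this
  have hvol : volume (Set.Icc (0:ℝ) 1 \ Set.Ioo a b) < 1 := by
    have hsub2 : Set.Ioo a b ⊆ Set.Icc (0:ℝ) 1 := by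
      intro y hy
      constructor
      · have := le_max_left 0 (x - ε); rw [← ha] at this
        exact le_trans this hy.1.le
      · have := min_le_left 1 (x + ε); rw [← hb] at this
        exact le_trans hy.2.le this
    rw [measure_diff hsub2 measurableSet_Ioo.nullMeasurableSet (by simp)]
    simp only [Real.volume_Icc, Real.volume_Ioo, sub_zero]
    rw [ENNReal.ofReal_one]
    apply ENNReal.sub_lt_self ENNReal.one_ne_top one_ne_zero
    simpa using hab
  exact absurd (le_trans volume_union_ge (measure_mono hUsub)) (not_le.2 hvol)
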